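/- Let λ ∈ ℂ, let Δ, Δ', Δ'', Δ''' be fixed n×n complex matrices with Δ invertible, and let M, η̂, ξ̂ ∈ ℂⁿ. Define w(θ) = e^{λθ} Δ⁻¹ (M + [Δ' − θΔ] η̂ + [Δ'' − θ²Δ] ξ̂) and v(θ) = e^{λθ} Δ⁻¹ ([Δ' − θΔ] w(0) − ½[Δ'' − θ²Δ] η̂ − ⅓[Δ''' − θ³Δ] ξ̂). Then λ v(θ) − v'(θ) = w(θ) for all θ ∈ ℝ. -/

import Mathlib

set_option maxHeartbeats 1000000


open Matrix

theorem resolvent_representation_corollary25 {n : ℕ} (lam : ℂ)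
    (Δ Δ' Δ'' Δ''' : Matrix (Fin n) (Fin n) ℂ) (hΔ : IsUnit Δ.det)
    (M η ξ : Fin n → ℂ) :
    let w : ℝ → Fin n → ℂ := fun θ => Complex.exp (lam * θ) •
      Δ⁻¹.mulVec (M + (Δ' - (θ : ℂ) • Δ).mulVec η + (Δ'' - (θ : ℂ)^2 • Δ).mulVec ξ)
    let v : ℝ → Fin n → ℂ := fun θ => Complex.exp (lam * θ) •
      Δ⁻¹.mulVec ((Δ' - (θ : ℂ) • Δ).mulVec (w 0)
        - (2 : ℂ)⁻¹ • (Δ'' - (θ : ℂ)^2 • Δ).mulVec η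
        - (3 : ℂ)⁻¹ • (Δ''' - (θ : ℂ)^3 • Δ).mulVec ξ)
    ∀ θ : ℝ, lam • v θ - deriv v θ = w θ := by
  intro w v θ
  have hinv : ∀ x : Fin n → ℂ, Δ⁻¹.mulVec (Δ.mulVec x) = x := by
    intro x
    rw [Matrix.mulVec_mulVec, Matrix.nonsing_inv_mul Δ hΔ, Matrix.one_mulVec]
  set x : Fin n → ℂ := w 0 with hx
  set a : Fin n → ℂ := Δ⁻¹.mulVec (Δ'.mulVec x - (2:ℂ)⁻¹ • Δ''.mulVec η
    - (3:ℂ)⁻¹ • Δ'''.mulVec ξ) with ha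
  have hveq : v = fun t : ℝ => Complex.exp (lam * t) •
      (a + (-(t:ℂ)) • x + ((2:ℂ)⁻¹ * (t:ℂ)^2) • η + ((3:ℂ)⁻¹ * (t:ℂ)^3) • ξ) := by
    funext t
    show Complex.exp (lam * t) • _ = _
    congr 1
    have h1 : Δ⁻¹.mulVec ((Δ' - (t : ℂ) • Δ).mulVec x
        - (2 : ℂ)⁻¹ • (Δ'' - (t : ℂ)^2 • Δ).mulVec η
        - (3 : ℂ)⁻¹ • (Δ''' - (t : ℂ)^3 • Δ).mulVec ξ)
        = a + (-(t:ℂ)) • x + ((2:ℂ)⁻¹ * (t:ℂ)^2) • η + ((3:ℂ)⁻¹ * (t:ℂ)^3) • ξ := by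
      rw [ha]
      simp only [Matrix.sub_mulVec, Matrix.mulVec_sub, Matrix.mulVec_smul,
        Matrix.smul_mulVec, hinv, smul_sub, smul_smul]
      module
    exact h1
  have hweq : w θ = Complex.exp (lam * θ) • (x - (θ:ℂ) • η - (θ:ℂ)^2 • ξ) := by
    have hx0 : x = Δ⁻¹.mulVec (M + Δ'.mulVec η + Δ''.mulVec ξ) := by
      rw [hx]
      show Complex.exp (lam * ((0:ℝ):ℂ)) • _ = _
      norm_num
    show Complex.exp (lam * θ) • _ = _
    rw [hx0]
    congr 1
    simp only [Matrix.sub_mulVec, Matrix.mulVec_add, Matrix.mulVec_sub,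
      Matrix.smul_mulVec, hinv, Matrix.mulVec_smul]
    module
  have hc : HasDerivAt (fun t : ℝ => (t : ℂ)) 1 θ := by
    simpa using! Complex.ofRealCLM.hasDerivAt (x := θ)
  have he : HasDerivAt (fun t : ℝ => Complex.exp (lam * t))
      (Complex.exp (lam * θ) * (lam * 1)) θ := ((hc.const_mul lam).cexp)
  have h2 : HasDerivAt (fun t : ℝ => (2:ℂ)⁻¹ * (t:ℂ)^2) ((θ:ℂ)) θ := by
    have := ((hc.mul hc).const_mul (2:ℂ)⁻¹)
    simp only [Pi.mul_apply] at this
    convert this using 2 with t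
    · rfl
    · ring
    · ring
  have h3 : HasDerivAt (fun t : ℝ => (3:ℂ)⁻¹ * (t:ℂ)^3) ((θ:ℂ)^2) θ := by
    have := (((hc.mul hc).mul hc).const_mul (3:ℂ)⁻¹)
    simp only [Pi.mul_apply] at this
    convert this using 2 with t
    · rfl
    · ring
    · ring
  have hF : HasDerivAt (fun t : ℝ =>
      a + (-(t:ℂ)) • x + ((2:ℂ)⁻¹ * (t:ℂ)^2) • η + ((3:ℂ)⁻¹ * (t:ℂ)^3) • ξ)
      (((0 : Fin n → ℂ) + (-1 : ℂ) • x) + (θ:ℂ) • η + ((θ:ℂ)^2) • ξ) θ :=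
    (((hasDerivAt_const θ a).add (hc.neg.smul_const x)).add
      (h2.smul_const η)).add (h3.smul_const ξ)
  have hv : HasDerivAt v
      (Complex.exp (lam * θ) • (((0 : Fin n → ℂ) + (-1 : ℂ) • x)
          + (θ:ℂ) • η + ((θ:ℂ)^2) • ξ)
        + (Complex.exp (lam * θ) * (lam * 1)) •
          (a + (-(θ:ℂ)) • x + ((2:ℂ)⁻¹ * (θ:ℂ)^2) • η + ((3:ℂ)⁻¹ * (θ:ℂ)^3) • ξ)) θ := by
    rw [hveq]; exact he.smul hF
  rw [hv.deriv, hweq, hveq]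
  simp only []
  match_scalars <;> ring
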